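/- Let F be a field of characteristic zero, A a nontrivial additive abelian group, and ∂ : A → F an additive nondegenerate map. Define, on the free F-module with basis {L(x), I(x) : x ∈ A}, the Lie bracket [L(x),L(y)] = ∂(y−x)L(x+y), [L(x),I(y)] = ∂(y)I(x+y), [I(x),I(y)] = 0. Then the bilinear map ψ₁ defined by ψ₁(I(x),I(y)) = δ_{x+y,0}·∂(y) and ψ₁ = 0 on all other pairs of basis elements is a 2-cocycle on this Lie algebra. -/
import Mathlib


/-- The bracket of the Lie algebra `D₁` of generalized differential operators of order at
most one, on basis elements: `Sum.inl x` stands for `L x = t^x ∂`, `Sum.inr x` for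
`I x = t^x`.  The result lives in the free module on the basis. -/
noncomputable def d1Bracket {F A : Type*} [Field F] [AddCommGroup A]
    (d : A →+ F) : (A ⊕ A) → (A ⊕ A) → ((A ⊕ A) →₀ F)
  | Sum.inl x, Sum.inl y => Finsupp.single (Sum.inl (x + y)) (d (y - x))
  | Sum.inl x, Sum.inr y => Finsupp.single (Sum.inr (x + y)) (d y)
  | Sum.inr x, Sum.inl y => Finsupp.single (Sum.inr (y + x)) (- d x)
  | Sum.inr _, Sum.inr _ => 0

/-- Evaluation of the bilinear extension of a map `ψ` on basis pairs, in its first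
argument, against an element of the free module. -/
noncomputable def pairEval {F A : Type*} [Field F] [AddCommGroup A]
    (ψ : (A ⊕ A) → (A ⊕ A) → F) (m : (A ⊕ A) →₀ F) (b : A ⊕ A) : F :=
  m.sum fun b' c => c * ψ b' b

lemma pairEval_single {F A : Type*} [Field F] [AddCommGroup A]
    (ψ : (A ⊕ A) → (A ⊕ A) → F) (a b : A ⊕ A) (c : F) :
    pairEval ψ (Finsupp.single a c) b = c * ψ a b := by
  unfold pairEval
  rw [Finsupp.sum_single_index]
  simp

lemma pairEval_zero {F A : Type*} [Field F] [AddCommGroup A]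
    (ψ : (A ⊕ A) → (A ⊕ A) → F) (b : A ⊕ A) :
    pairEval ψ 0 b = 0 := by
  simp [pairEval]

lemma pairEval_eq {F A : Type*} [Field F] [AddCommGroup A]
    (ψ : (A ⊕ A) → (A ⊕ A) → F) (m : (A ⊕ A) →₀ F) (b : A ⊕ A) :
    pairEval ψ m b = Finsupp.linearCombination F (fun b' => ψ b' b) m := by
  simp [pairEval, Finsupp.linearCombination_apply, Finsupp.sum, smul_eq_mul]

lemma pairEval_sub {F A : Type*} [Field F] [AddCommGroup A]
    (ψ : (A ⊕ A) → (A ⊕ A) → F) (m n : (A ⊕ A) →₀ F) (b : A ⊕ A) :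
    pairEval ψ (m - n) b = pairEval ψ m b - pairEval ψ n b := by
  simp [pairEval_eq]

lemma pairEval_neg {F A : Type*} [Field F] [AddCommGroup A]
    (ψ : (A ⊕ A) → (A ⊕ A) → F) (m : (A ⊕ A) →₀ F) (b : A ⊕ A) :
    pairEval ψ (-m) b = - pairEval ψ m b := by
  simp [pairEval_eq]

open Classical in
/-- The map `ψ₁` with `ψ₁(I x, I y) = δ_{x+y,0} ∂(y)`, zero on other basis pairs, is an
(alternating) 2-cocycle on `D₁`. -/
theorem stmt_3 {F : Type*} [Field F] [CharZero F]
    {A : Type*} [AddCommGroup A] [Nontrivial A]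
    (d : A →+ F) (hd : ∀ x : A, d x = 0 → x = 0)
    (ψ : (A ⊕ A) → (A ⊕ A) → F)
    (hψ : ∀ x y : A, ψ (Sum.inr x) (Sum.inr y) = if x + y = 0 then d y else 0)
    (hψLL : ∀ x y : A, ψ (Sum.inl x) (Sum.inl y) = 0)
    (hψLI : ∀ x y : A, ψ (Sum.inl x) (Sum.inr y) = 0)
    (hψIL : ∀ x y : A, ψ (Sum.inr x) (Sum.inl y) = 0) :
    (∀ b₁ b₂ : A ⊕ A, ψ b₁ b₂ = - ψ b₂ b₁) ∧
    (∀ b₁ b₂ b₃ : A ⊕ A,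
      pairEval ψ (d1Bracket d b₁ b₂) b₃ + pairEval ψ (d1Bracket d b₂ b₃) b₁ +
        pairEval ψ (d1Bracket d b₃ b₁) b₂ = 0) := by
  constructor
  · rintro (x | x) (y | y) <;> simp [hψ, hψLL, hψLI, hψIL]
    by_cases h : x + y = 0
    · have h' : y + x = 0 := by rw [add_comm]; exact h
      have : d x + d y = 0 := by rw [← map_add, h, map_zero]
      simp [h, h']
      linear_combination this
    · have h' : ¬ y + x = 0 := fun hc => h (by rwa [add_comm])
      simp [h, h']
  · rintro (x | x) (y | y) (z | z) <;>
      simp [d1Bracket, pairEval_sub, pairEval_neg, pairEval_single, pairEval_zero, hψ, hψLL, hψLI, hψIL]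
    all_goals first
      | rfl
      | (split_ifs with h1 h2 h3 <;>
          first
          | ring1
          | (exfalso; apply h2; rw [← h1]; abel)
          | (exfalso; apply h1; rw [← h3]; abel))
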